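/- Let D(z,w) = 8z³ − 8z²w − 8z² − w² − w + 10zw. There exists a constant c ∈ ℂ, c ≠ 0, such that for all z, w ∈ ℂ one has 64(w − z²)³ + 9·D(z,w)² = c·(w + 8z²)·(9(w − z)² + w − z²)·(9(z − 1)² + w − z²). (Thus the critical level curve {R_{c2} = −9/64} of R_{c2}(z,w) = (w − z²)³/D(z,w)² is the union of the three conics {w + 8z² = 0}, {9(w − z)² + w − z² = 0} and {9(z − 1)² + w − z² = 0}.) -/
import Mathlib


/-- The critical level curve `{R_{c2} = −9/64}` of `R_{c2}(z,w) = (w−z²)³/D(z,w)²`,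
`D(z,w) = 8z³ − 8z²w − 8z² − w² − w + 10zw`, is the union of the three conics
`{w + 8z² = 0}`, `{9(w−z)² + w − z² = 0}`, `{9(z−1)² + w − z² = 0}`. -/
theorem stmt_11 (D : ℂ → ℂ → ℂ)
    (hD : ∀ z w : ℂ, D z w = 8*z^3 - 8*z^2*w - 8*z^2 - w^2 - w + 10*z*w) :
    ∃ c : ℂ, c ≠ 0 ∧ ∀ z w : ℂ,
      64*(w - z^2)^3 + 9*(D z w)^2
        = c * (w + 8*z^2) * (9*(w - z)^2 + w - z^2) * (9*(z - 1)^2 + w - z^2) := by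
  exact ⟨1, one_ne_zero, fun z w => by rw [hD]; ring⟩
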